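/- arXiv:1012.0538 — 4 statements merged into one kernel-verified Lean document; each statement's English description precedes it below -/
import Mathlib

section
/- Fix r ≥ 1, a subset S ⊆ {1,…,r} and a subset N ⊆ {0,1,…,r}. For λ ∈ ℤʳ adopt the convention λ₀ = λ_{r+1} = 0. Then the following are equivalent: (i) there exists λ ∈ ℤʳ with ∑_{i=1}^r λ_i < 0 such that for every i ∈ {1,…,r} with λ_i > 0 one has i ∈ S, and for every j ∈ {0,…,r} with λ_j + λ_{j+1} < 0 one has j ∈ N; (ii) there exist integers μ ≥ 1 and ν with 0 ≤ ν ≤ r − 2μ + 1 such that ν ∈ N, ν + 2μ − 1 ∈ N, and ν + 2i ∈ S for every i with 1 ≤ i ≤ μ − 1. -/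
open Finset

private lemma pairsum (lam : ℕ → ℤ) (b : ℕ) :
    ∀ n : ℕ, (∀ j, j ≤ n → 0 ≤ lam (b + 2*j) + lam (b + 2*j + 1)) →
      0 ≤ ∑ t ∈ Finset.Icc b (b + 2*n + 1), lam t := by
  intro n
  induction n with
  | zero =>
    intro h
    have h0 := h 0 le_rfl
    have e : b + 2*0 + 1 = b + 1 := by ring
    rw [e, Finset.sum_Icc_succ_top (by omega), Finset.Icc_self, Finset.sum_singleton]
    simpa using h0
  | succ n ih =>
    intro h
    have e : b + 2*(n+1) + 1 = (b + 2*n + 1) + 1 + 1 := by ring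
    rw [e, Finset.sum_Icc_succ_top (by omega), Finset.sum_Icc_succ_top (by omega)]
    have h1 := ih (fun j hj => h j (by omega))
    rw [show b + 2*n + 2 + 1 = b + 2*(n+1) + 1 from by ring,
      show b + 2*n + 1 + 1 = b + 2*(n+1) from by ring]
    linarith [h (n+1) le_rfl]

private lemma sum_cut (lam : ℕ → ℤ) {r : ℕ} (htop : ∀ i, r < i → lam i = 0)
    {b R : ℕ} (hR : r ≤ R) :
    ∑ t ∈ Finset.Icc b R, lam t = ∑ t ∈ Finset.Icc b r, lam t := by
  symm
  apply Finset.sum_subset (Finset.Icc_subset_Icc_right hR)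
  intro x hx hnx
  rw [Finset.mem_Icc] at hx hnx
  exact htop x (by omega)

private lemma tail_nonneg (lam : ℕ → ℤ) {r : ℕ} (htop : ∀ i, r < i → lam i = 0) (b : ℕ)
    (h : ∀ j, 0 ≤ lam (b + 2*j) + lam (b + 2*j + 1)) :
    0 ≤ ∑ t ∈ Finset.Icc b r, lam t := by
  have h2 := pairsum lam b r (fun j _ => h j)
  rwa [sum_cut lam htop (by omega)] at h2

private lemma sum_split (lam : ℕ → ℤ) {a b c : ℕ} (h1 : a ≤ b + 1) (h2 : b ≤ c) :
    ∑ t ∈ Finset.Icc a c, lam t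
      = (∑ t ∈ Finset.Icc a b, lam t) + ∑ t ∈ Finset.Icc (b+1) c, lam t := by
  simp only [← Finset.Ico_add_one_right_eq_Icc]
  exact (Finset.sum_Ico_consecutive _ h1 (by omega)).symm

private lemma key (r : ℕ) : ∀ lam : ℕ → ℤ, lam 0 = 0 → (∀ i, r < i → lam i = 0) →
    (∑ i ∈ Finset.Icc 1 r, lam i) < 0 →
    ∃ μ ν : ℕ, 1 ≤ μ ∧ ν + 2*μ ≤ r + 1 ∧
      lam ν + lam (ν+1) < 0 ∧
      lam (ν + 2*μ - 1) + lam (ν + 2*μ) < 0 ∧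
      ∀ i, 1 ≤ i → i ≤ μ - 1 → 0 < lam (ν + 2*i) := by
  induction r using Nat.strong_induction_on with
  | _ r IH =>
  intro lam h0 htop hsum
  classical
  by_cases hred : ∃ d, 1 ≤ d ∧ d ≤ r ∧ lam d ≤ 0 ∧
      ((∑ t ∈ Finset.Icc 1 (d-1), lam t) < 0 ∨ (∑ t ∈ Finset.Icc (d+1) r, lam t) < 0)
  · obtain ⟨d, hd1, hdr, hdneg, hcase⟩ := hred
    rcases hcase with hP | hT
    · -- prefix truncation at r' = d - 1
      have hd2 : 2 ≤ d := by
        by_contra hc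
        have : d = 1 := by omega
        rw [this] at hP
        simp [Finset.Icc_eq_empty_of_lt] at hP
      set r' := d - 1 with hr'
      set lam' : ℕ → ℤ := fun t => if t ≤ r' then lam t else 0 with hlam'
      have h0' : lam' 0 = 0 := by simp [hlam', h0]
      have htop' : ∀ i, r' < i → lam' i = 0 := by
        intro i hi; simp only [hlam']; rw [if_neg (by omega)]
      have hsum' : (∑ i ∈ Finset.Icc 1 r', lam' i) < 0 := by
        have : ∑ i ∈ Finset.Icc 1 r', lam' i = ∑ i ∈ Finset.Icc 1 r', lam i := by
          apply Finset.sum_congr rfl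
          intro x hx
          rw [Finset.mem_Icc] at hx
          simp only [hlam']; rw [if_pos (by omega)]
        rw [this]; exact hP
      obtain ⟨μ, ν, hμ, hb, hn1, hn2, hint⟩ := IH r' (by omega) lam' h0' htop' hsum'
      refine ⟨μ, ν, hμ, by omega, ?_, ?_, ?_⟩
      · have e1 : lam' ν = lam ν := by simp only [hlam']; rw [if_pos (by omega)]
        have e2 : lam' (ν+1) = lam (ν+1) := by simp only [hlam']; rw [if_pos (by omega)]
        rw [e1, e2] at hn1; exact hn1
      · have e1 : lam' (ν + 2*μ - 1) = lam (ν + 2*μ - 1) := by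
          simp only [hlam']; rw [if_pos (by omega)]
        by_cases hq : ν + 2*μ ≤ r'
        · have e2 : lam' (ν + 2*μ) = lam (ν + 2*μ) := by
            simp only [hlam']; rw [if_pos hq]
          rw [e1, e2] at hn2; exact hn2
        · have hqd : ν + 2*μ = d := by omega
          have e2 : lam' (ν + 2*μ) = 0 := by simp only [hlam']; rw [if_neg (by omega)]
          rw [e1, e2] at hn2
          have : lam (ν + 2*μ) ≤ 0 := by rw [hqd]; exact hdneg
          linarith
      · intro i hi1 hi2
        have e1 : lam' (ν + 2*i) = lam (ν + 2*i) := by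
          simp only [hlam']; rw [if_pos (by omega)]
        have := hint i hi1 hi2
        rw [e1] at this; exact this
    · -- suffix truncation: drop 1..d
      have hdr1 : d ≤ r - 1 := by
        by_contra hc
        have : d = r := by omega
        rw [this] at hT
        simp [Finset.Icc_eq_empty_of_lt] at hT
      set r'' := r - d with hr''
      set lam'' : ℕ → ℤ := fun t => if t = 0 then 0 else lam (d + t) with hlam''
      have h0'' : lam'' 0 = 0 := by simp [hlam'']
      have htop'' : ∀ i, r'' < i → lam'' i = 0 := by
        intro i hi; simp only [hlam'']
        by_cases h : i = 0
        · rw [if_pos h]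
        · rw [if_neg h]; exact htop _ (by omega)
      have hsum'' : (∑ i ∈ Finset.Icc 1 r'', lam'' i) < 0 := by
        have e1 : ∑ i ∈ Finset.Icc 1 r'', lam'' i
            = ∑ i ∈ Finset.Icc 1 r'', lam (d + i) := by
          apply Finset.sum_congr rfl
          intro x hx
          rw [Finset.mem_Icc] at hx
          simp only [hlam'']; rw [if_neg (by omega)]
        have e2 : ∑ i ∈ Finset.Icc 1 r'', lam (d + i)
            = ∑ t ∈ Finset.Icc (d+1) (d+r''), lam t := by
          rw [← Finset.map_add_left_Icc, Finset.sum_map]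
          simp [addLeftEmbedding_apply]
        have e3 : d + r'' = r := by omega
        rw [e1, e2, e3]; exact hT
      obtain ⟨μ, ν'', hμ, hb, hn1, hn2, hint⟩ := IH r'' (by omega) lam'' h0'' htop'' hsum''
      refine ⟨μ, d + ν'', hμ, by omega, ?_, ?_, ?_⟩
      · have e2 : lam'' (ν''+1) = lam (d + ν'' + 1) := by
          simp only [hlam'']; rw [if_neg (by omega)]; ring_nf
        by_cases hz : ν'' = 0
        · rw [hz] at hn1
          rw [hz] at e2
          rw [h0'', e2] at hn1
          have : lam (d + 0) ≤ 0 := by simpa using hdneg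
          simp only [hz]
          have hgoal : lam (d + 0) + lam (d + 0 + 1) < 0 := by
            simp only [Nat.add_zero] at this ⊢
            simp only [Nat.add_zero] at hn1
            linarith
          exact hgoal
        · have e1 : lam'' ν'' = lam (d + ν'') := by
            simp only [hlam'']; rw [if_neg hz]
          rw [e1, e2] at hn1; exact hn1
      · have e1 : lam'' (ν'' + 2*μ - 1) = lam (d + (ν'' + 2*μ - 1)) := by
          simp only [hlam'']; rw [if_neg (by omega)]
        have e2 : lam'' (ν'' + 2*μ) = lam (d + (ν'' + 2*μ)) := by
          simp only [hlam'']; rw [if_neg (by omega)]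
        rw [e1, e2] at hn2
        have i1 : d + ν'' + 2*μ - 1 = d + (ν'' + 2*μ - 1) := by omega
        have i2 : d + ν'' + 2*μ = d + (ν'' + 2*μ) := by omega
        rw [i1, i2]; exact hn2
      · intro i hi1 hi2
        have := hint i hi1 hi2
        have e1 : lam'' (ν'' + 2*i) = lam (d + (ν'' + 2*i)) := by
          simp only [hlam'']; rw [if_neg (by omega)]
        rw [e1] at this
        have i1 : d + ν'' + 2*i = d + (ν'' + 2*i) := by omega
        rw [i1]; exact this
  · -- no reduction possible: direct construction
    push_neg at hred
    have hB := hred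
    -- there is a node
    have hex : ∃ t, t ≤ r ∧ lam t + lam (t+1) < 0 := by
      by_contra hc
      push_neg at hc
      have hall : ∀ j, 0 ≤ lam (1 + 2*j) + lam (1 + 2*j + 1) := by
        intro j
        by_cases hj : 1 + 2*j ≤ r
        · exact hc _ hj
        · rw [htop _ (by omega), htop _ (by omega)]; norm_num
      have := tail_nonneg lam htop 1 hall
      linarith
    set P1 : ℕ → Prop := fun t => lam t + lam (t+1) < 0 with hP1def
    set ν' := Nat.findGreatest P1 r with hν'def
    have hν'spec : P1 ν' := by
      obtain ⟨t, ht, hft⟩ := hex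
      exact Nat.findGreatest_spec ht hft
    have hν'le : ν' ≤ r := Nat.findGreatest_le r
    have hmax : ∀ t, ν' < t → 0 ≤ lam t + lam (t+1) := by
      intro t ht
      by_cases htr : t ≤ r
      · have := Nat.findGreatest_is_greatest (P := P1) ht htr
        simp only [hP1def] at this
        linarith [not_lt.mp this]
      · rw [htop t (by omega), htop (t+1) (by omega)]; norm_num
    -- step i : ν' ≥ 1 and lam ν' ≤ 0
    have hstep1 : 1 ≤ ν' ∧ lam ν' ≤ 0 := by
      by_contra hc
      push_neg at hc
      have hd : lam (ν'+1) < 0 := by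
        rcases Nat.eq_zero_or_pos ν' with h0' | h1'
        · rw [h0']
          have hspec := hν'spec
          simp only [hP1def] at hspec
          rw [h0', h0] at hspec
          simpa using hspec
        · have hpos := hc h1'
          have := hν'spec
          simp only [hP1def] at this
          linarith
      have hdr : ν' + 1 ≤ r := by
        by_contra hh
        rw [htop _ (by omega)] at hd
        exact absurd hd (by norm_num)
      have hBd := (hB (ν'+1) (by omega) hdr (le_of_lt hd)).1
      rw [Nat.add_sub_cancel] at hBd
      have hsplit := sum_split lam (a := 1) (b := ν') (c := r) (by omega) hν'le
      have htail : (∑ t ∈ Finset.Icc (ν'+1) r, lam t) < 0 := by linarith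
      have hnn : 0 ≤ ∑ t ∈ Finset.Icc (ν'+1) r, lam t :=
        tail_nonneg lam htop (ν'+1) (fun j => hmax _ (by omega))
      linarith
    -- step ii : prefix sum up to ν' is negative
    have hPν' : (∑ t ∈ Finset.Icc 1 ν', lam t) < 0 := by
      have hBν' := (hB ν' hstep1.1 hν'le hstep1.2).2
      have hsplit := sum_split lam (a := 1) (b := ν') (c := r) (by omega) hν'le
      linarith
    -- step iii : find the partner node below ν' at odd distance
    have hex2 : ∃ q, q ≤ ν' - 1 ∧ (q % 2 = (ν'-1) % 2 ∧ lam q + lam (q+1) < 0) := by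
      by_contra hc
      push_neg at hc
      set b0 := (ν' - 1) % 2 with hb0def
      have hb0 : ν' = b0 + 2 * ((ν'-1)/2) + 1 := by omega
      have hp : 0 ≤ ∑ t ∈ Finset.Icc b0 (b0 + 2*((ν'-1)/2) + 1), lam t := by
        apply pairsum
        intro j hj
        have hle : b0 + 2*j ≤ ν' - 1 := by omega
        have hpar : (b0 + 2*j) % 2 = (ν'-1) % 2 := by omega
        by_contra hcc
        exact absurd (hc _ hle hpar) (by linarith)
      rw [← hb0] at hp
      have hb01 : b0 = 0 ∨ b0 = 1 := by omega
      rcases hb01 with h | h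
      · rw [h] at hp
        have hsplit := sum_split lam (a := 0) (b := 0) (c := ν') (by omega) (by omega)
        rw [Finset.Icc_self, Finset.sum_singleton, h0] at hsplit
        simp only [zero_add] at hsplit
        rw [hsplit] at hp
        linarith
      · rw [h] at hp
        linarith
    obtain ⟨q0, hq0le, hq0⟩ := hex2
    set P2 : ℕ → Prop := fun q => q % 2 = (ν'-1) % 2 ∧ lam q + lam (q+1) < 0 with hP2def
    set ν := Nat.findGreatest P2 (ν'-1) with hνdef
    have hνspec : P2 ν := Nat.findGreatest_spec hq0le hq0
    have hνle : ν ≤ ν' - 1 := Nat.findGreatest_le _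
    have hνmax : ∀ q, ν < q → q ≤ ν' - 1 → q % 2 = (ν'-1) % 2 →
        0 ≤ lam q + lam (q+1) := by
      intro q hq1 hq2 hq3
      have hnp := Nat.findGreatest_is_greatest (P := P2) hq1 hq2
      simp only [hP2def] at hnp
      push_neg at hnp
      linarith [hnp hq3]
    have hνpar : ν % 2 = (ν'-1) % 2 := hνspec.1
    have hm : ν' = ν + 2 * ((ν' - 1 - ν)/2) + 1 := by omega
    set m := (ν' - 1 - ν)/2 with hmdef
    refine ⟨m+1, ν, by omega, by omega, hνspec.2, ?_, ?_⟩
    · have e1 : ν + 2*(m+1) - 1 = ν' := by omega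
      have e2 : ν + 2*(m+1) = ν' + 1 := by omega
      rw [e1, e2]
      exact hν'spec
    · intro i hi1 hi2
      by_contra hcpos
      push_neg at hcpos
      set p := ν + 2*i with hpdef
      have hp1 : 1 ≤ p := by omega
      have hpint : p ≤ ν' - 1 := by omega
      have hpr : p ≤ r := by omega
      have hBp := (hB p hp1 hpr hcpos).1
      have hsplit := sum_split lam (a := 1) (b := p-1) (c := r) (by omega) (by omega)
      rw [show p - 1 + 1 = p from by omega] at hsplit
      have htail : (∑ t ∈ Finset.Icc p r, lam t) < 0 := by linarith
      have hnn : 0 ≤ ∑ t ∈ Finset.Icc p r, lam t := by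
        apply tail_nonneg lam htop p
        intro j
        rcases lt_or_ge ν' (p + 2*j) with h | h
        · exact hmax _ h
        · exact hνmax _ (by omega) (by omega) (by omega)
      linarith


-- alternating sum helper for the converse direction
private lemma altsum (ν : ℕ) : ∀ m : ℕ,
    (∑ t ∈ Finset.Icc (ν+1) (ν+2*m+1),
      (if (t-ν) % 2 = 1 then (-1 : ℤ) else 1)) = -1 := by
  intro m
  induction m with
  | zero =>
    rw [show ν + 2*0 + 1 = ν + 1 from by ring, Finset.Icc_self, Finset.sum_singleton]
    rw [if_pos (by omega)]
  | succ m ih =>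
    rw [show ν + 2*(m+1) + 1 = (ν + 2*m + 1) + 1 + 1 from by ring,
      Finset.sum_Icc_succ_top (by omega), Finset.sum_Icc_succ_top (by omega), ih]
    rw [if_neg (by omega), if_pos (by omega)]
    ring




/-- Hilbert–Mumford combinatorics of the VGIT plus-chamber for a chain of `r` monomial
`H_{m,2}`-curves: condition (i) is the existence of a destabilizing one-parameter
subgroup, condition (ii) is membership in one of the loci `V_{μ,ν}`. The convention
`λ₀ = λ_{r+1} = 0` is encoded by the first two conditions on `lam`. -/
theorem stmt_5 (r : ℕ) (hr : 1 ≤ r) (S N : Set ℕ)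
    (hS : S ⊆ Set.Icc 1 r) (hN : N ⊆ Set.Iic r) :
    (∃ lam : ℕ → ℤ, lam 0 = 0 ∧ (∀ i, r < i → lam i = 0) ∧
      (∑ i ∈ Finset.Icc 1 r, lam i) < 0 ∧
      (∀ i, 1 ≤ i → i ≤ r → 0 < lam i → i ∈ S) ∧
      (∀ j, j ≤ r → lam j + lam (j + 1) < 0 → j ∈ N)) ↔
    (∃ μ ν : ℕ, 1 ≤ μ ∧ ν + 2 * μ ≤ r + 1 ∧ ν ∈ N ∧ ν + 2 * μ - 1 ∈ N ∧
      ∀ i, 1 ≤ i → i ≤ μ - 1 → ν + 2 * i ∈ S) := by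
  constructor
  · rintro ⟨lam, h0, htop, hsum, hSpos, hNnode⟩
    obtain ⟨μ, ν, hμ, hb, hn1, hn2, hint⟩ := key r lam h0 htop hsum
    refine ⟨μ, ν, hμ, hb, ?_, ?_, ?_⟩
    · exact hNnode ν (by omega) hn1
    · apply hNnode (ν + 2*μ - 1) (by omega)
      rw [show ν + 2*μ - 1 + 1 = ν + 2*μ from by omega]
      exact hn2
    · intro i h1 h2
      exact hSpos (ν + 2*i) (by omega) (by omega) (hint i h1 h2)
  · rintro ⟨μ, ν, hμ, hb, hνN, hν'N, hSint⟩
    set lam : ℕ → ℤ := fun t =>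
      if ν + 1 ≤ t ∧ t ≤ ν + 2*μ - 1 then (if (t-ν) % 2 = 1 then (-1 : ℤ) else 1) else 0
      with hlam
    refine ⟨lam, ?_, ?_, ?_, ?_, ?_⟩
    · simp only [hlam]; rw [if_neg (by omega)]
    · intro i hi; simp only [hlam]; rw [if_neg (by omega)]
    · have hsub : ∑ i ∈ Finset.Icc 1 r, lam i
          = ∑ t ∈ Finset.Icc (ν+1) (ν+2*μ-1), lam t := by
        symm
        apply Finset.sum_subset (Finset.Icc_subset_Icc (by omega) (by omega))
        intro x hx hnx
        rw [Finset.mem_Icc] at hx hnx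
        simp only [hlam]; rw [if_neg (by omega)]
      have hcong : ∑ t ∈ Finset.Icc (ν+1) (ν+2*μ-1), lam t
          = ∑ t ∈ Finset.Icc (ν+1) (ν+2*μ-1), (if (t-ν) % 2 = 1 then (-1 : ℤ) else 1) := by
        apply Finset.sum_congr rfl
        intro x hx
        rw [Finset.mem_Icc] at hx
        simp only [hlam]; rw [if_pos (by omega)]
      rw [hsub, hcong, show ν + 2*μ - 1 = ν + 2*(μ-1) + 1 from by omega, altsum]
      norm_num
    · intro t ht1 htr hpos
      by_cases hin : ν + 1 ≤ t ∧ t ≤ ν + 2*μ - 1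
      · by_cases hpar : (t - ν) % 2 = 1
        · exfalso
          have : lam t = -1 := by simp only [hlam]; rw [if_pos hin, if_pos hpar]
          rw [this] at hpos; norm_num at hpos
        · have heq : t = ν + 2*((t-ν)/2) := by omega
          have h1 : 1 ≤ (t-ν)/2 := by omega
          have h2 : (t-ν)/2 ≤ μ - 1 := by omega
          rw [heq]
          exact hSint _ h1 h2
      · exfalso
        have : lam t = 0 := by simp only [hlam]; rw [if_neg hin]
        rw [this] at hpos; norm_num at hpos
    · intro j hjr hneg
      have hval : ∀ t, lam t
          = if ν + 1 ≤ t ∧ t ≤ ν + 2*μ - 1 then (if (t-ν) % 2 = 1 then (-1 : ℤ) else 1) else 0 :=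
        fun t => rfl
      by_cases hj1 : j < ν
      · exfalso
        rw [hval j, hval (j+1), if_neg (by omega), if_neg (by omega)] at hneg
        norm_num at hneg
      by_cases hj2 : j = ν
      · rwa [hj2]
      by_cases hj3 : j = ν + 2*μ - 1
      · rwa [hj3]
      by_cases hj4 : ν + 2*μ - 1 < j
      · exfalso
        rw [hval j, hval (j+1), if_neg (by omega), if_neg (by omega)] at hneg
        norm_num at hneg
      · -- ν + 1 ≤ j ≤ ν + 2μ - 2
        exfalso
        have hrange : ν + 1 ≤ j ∧ j + 1 ≤ ν + 2*μ - 1 := by omega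
        have e1 : lam j = (if (j-ν) % 2 = 1 then (-1 : ℤ) else 1) := by
          rw [hval j, if_pos (show ν + 1 ≤ j ∧ j ≤ ν + 2*μ - 1 from by omega)]
        have e2 : lam (j+1) = (if (j+1-ν) % 2 = 1 then (-1 : ℤ) else 1) := by
          rw [hval (j+1), if_pos (show ν + 1 ≤ j + 1 ∧ j + 1 ≤ ν + 2*μ - 1 from by omega)]
        rw [e1, e2] at hneg
        by_cases hpar : (j - ν) % 2 = 1
        · rw [if_pos hpar, if_neg (show ¬ (j+1-ν) % 2 = 1 from by omega)] at hneg
          norm_num at hneg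
        · rw [if_neg hpar, if_pos (show (j+1-ν) % 2 = 1 from by omega)] at hneg
          norm_num at hneg
end

section
/- Let m ≥ 1. The kernel of the ℂ-algebra homomorphism φ : ℂ[x,y] → ℂ[t] × ℂ[u] determined by φ(x) = (t, u) and φ(y) = (t^{m+1}, −u^{m+1}) is the principal ideal generated by y² − x^{2m+2}. -/
open Polynomial MvPolynomial

/-- Forward map `ℂ[x,y] → (ℂ[x])[Y]`, `x ↦ C X`, `y ↦ Y`. -/
noncomputable def stmtF : MvPolynomial (Fin 2) ℂ →ₐ[ℂ] Polynomial (Polynomial ℂ) :=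
  MvPolynomial.aeval ![Polynomial.C Polynomial.X, Polynomial.X]

/-- Backward map `(ℂ[x])[Y] → ℂ[x,y]`. -/
noncomputable def stmtG : Polynomial (Polynomial ℂ) →ₐ[ℂ] MvPolynomial (Fin 2) ℂ :=
  Polynomial.aevalTower (Polynomial.aeval (MvPolynomial.X 0)) (MvPolynomial.X 1)

lemma stmtGF (p : MvPolynomial (Fin 2) ℂ) : stmtG (stmtF p) = p := by
  have h : stmtG.comp stmtF = AlgHom.id ℂ (MvPolynomial (Fin 2) ℂ) := by
    apply MvPolynomial.algHom_ext
    intro i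
    fin_cases i <;>
      simp [stmtF, stmtG, Polynomial.aevalTower_X, Polynomial.aevalTower_C]
  calc stmtG (stmtF p) = (stmtG.comp stmtF) p := rfl
    _ = p := by rw [h]; rfl

/-- The kernel of `ℂ[x,y] → ℂ[t] × ℂ[u]`, `x ↦ (t,u)`, `y ↦ (t^{m+1}, −u^{m+1})`, is the
principal ideal generated by `y² − x^{2m+2}`. -/
theorem stmt_12 (m : ℕ) (hm : 1 ≤ m) :
    RingHom.ker
        (MvPolynomial.aeval
          ![((Polynomial.X, Polynomial.X) : Polynomial ℂ × Polynomial ℂ),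
            ((Polynomial.X : Polynomial ℂ) ^ (m + 1), -(Polynomial.X : Polynomial ℂ) ^ (m + 1))] :
          MvPolynomial (Fin 2) ℂ →ₐ[ℂ] Polynomial ℂ × Polynomial ℂ) =
      Ideal.span
        {(MvPolynomial.X 1 : MvPolynomial (Fin 2) ℂ) ^ 2 - MvPolynomial.X 0 ^ (2 * m + 2)} := by
  set φ : MvPolynomial (Fin 2) ℂ →ₐ[ℂ] Polynomial ℂ × Polynomial ℂ :=
    MvPolynomial.aeval
      ![((Polynomial.X, Polynomial.X) : Polynomial ℂ × Polynomial ℂ),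
        ((Polynomial.X : Polynomial ℂ) ^ (m + 1), -(Polynomial.X : Polynomial ℂ) ^ (m + 1))]
    with hφ
  set g : MvPolynomial (Fin 2) ℂ :=
    (MvPolynomial.X 1 : MvPolynomial (Fin 2) ℂ) ^ 2 - MvPolynomial.X 0 ^ (2 * m + 2) with hg
  have hφg : φ g = 0 := by
    have h1 : φ (MvPolynomial.X 0) =
        ((Polynomial.X, Polynomial.X) : Polynomial ℂ × Polynomial ℂ) := by
      simp [hφ]
    have h2 : φ (MvPolynomial.X 1) =
        (((Polynomial.X : Polynomial ℂ) ^ (m + 1),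
          -(Polynomial.X : Polynomial ℂ) ^ (m + 1)) : Polynomial ℂ × Polynomial ℂ) := by
      simp [hφ]
    have : (2 : ℕ) * m + 2 = (m + 1) * 2 := by ring
    rw [hg, map_sub, map_pow, map_pow, h1, h2, this, Prod.ext_iff]
    constructor <;> simp [Prod.pow_def, ← pow_mul]
  apply le_antisymm
  · -- hard direction: ker ≤ span
    intro p hp
    have hp0 : φ p = 0 := hp
    -- work in (ℂ[x])[Y]
    set g' : Polynomial (Polynomial ℂ) :=
      Polynomial.X ^ 2 - Polynomial.C ((Polynomial.X : Polynomial ℂ) ^ (2 * m + 2)) with hg'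
    have hmonic : g'.Monic := Polynomial.monic_X_pow_sub_C _ (by norm_num)
    have hGg' : stmtG g' = g := by
      simp [hg', hg, stmtG, Polynomial.aevalTower_X, Polynomial.aevalTower_C]
    set P := stmtF p with hP
    set r := P %ₘ g' with hr
    have hdeg : r.degree ≤ 1 := by
      have := Polynomial.degree_modByMonic_lt P hmonic
      have hdg' : g'.degree = 2 := by
        rw [hg']
        compute_degree!
      rw [hdg'] at this
      exact Order.le_of_lt_succ (by exact_mod_cast this)
    have hrab := Polynomial.eq_X_add_C_of_degree_le_one hdeg
    set a := r.coeff 0 with ha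
    set b := r.coeff 1 with hb
    -- p = G r + g * G (P /ₘ g')
    have hdecomp : p = stmtG r + g * stmtG (P /ₘ g') := by
      have h1 : r + g' * (P /ₘ g') = P := Polynomial.modByMonic_add_div P g'
      calc p = stmtG P := (stmtGF p).symm
        _ = stmtG (r + g' * (P /ₘ g')) := by rw [h1]
        _ = stmtG r + stmtG g' * stmtG (P /ₘ g') := by
            rw [map_add, map_mul]
        _ = stmtG r + g * stmtG (P /ₘ g') := by rw [hGg']
    -- φ (G r) = 0
    have hφGr : φ (stmtG r) = 0 := by
      have : φ p = φ (stmtG r) + φ g * φ (stmtG (P /ₘ g')) := by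
        rw [hdecomp, map_add, map_mul]
      rw [hp0, hφg, zero_mul, add_zero] at this
      exact this.symm
    -- compute φ (G r)
    have hGr : stmtG r = Polynomial.aeval (MvPolynomial.X 0 : MvPolynomial (Fin 2) ℂ) b *
        MvPolynomial.X 1 + Polynomial.aeval (MvPolynomial.X 0 : MvPolynomial (Fin 2) ℂ) a := by
      conv_lhs => rw [hrab]
      simp [stmtG, Polynomial.aevalTower_X, Polynomial.aevalTower_C]
    have hφX0 : φ (MvPolynomial.X 0) =
        ((Polynomial.X, Polynomial.X) : Polynomial ℂ × Polynomial ℂ) := by simp [hφ]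
    have hφX1 : φ (MvPolynomial.X 1) =
        (((Polynomial.X : Polynomial ℂ) ^ (m + 1),
          -(Polynomial.X : Polynomial ℂ) ^ (m + 1)) : Polynomial ℂ × Polynomial ℂ) := by
      simp [hφ]
    have key : ∀ q : Polynomial ℂ,
        φ (Polynomial.aeval (MvPolynomial.X 0 : MvPolynomial (Fin 2) ℂ) q) = (q, q) := by
      intro q
      rw [← Polynomial.aeval_algHom_apply, hφX0]
      have h1 : (Polynomial.aeval ((Polynomial.X, Polynomial.X) :
          Polynomial ℂ × Polynomial ℂ)) q =
          ((Polynomial.aeval (Polynomial.X : Polynomial ℂ)) q,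
           (Polynomial.aeval (Polynomial.X : Polynomial ℂ)) q) := by
        exact Prod.ext_iff.mpr
          ⟨(Polynomial.aeval_algHom_apply
              (AlgHom.fst ℂ (Polynomial ℂ) (Polynomial ℂ)) _ q).symm,
           (Polynomial.aeval_algHom_apply
              (AlgHom.snd ℂ (Polynomial ℂ) (Polynomial ℂ)) _ q).symm⟩
      rw [h1, Polynomial.aeval_X_left_apply]
    have hval : φ (stmtG r) =
        (b * Polynomial.X ^ (m + 1) + a, b * (-(Polynomial.X : Polynomial ℂ) ^ (m + 1)) + a) := by
      rw [hGr, map_add, map_mul, key, key, hφX1]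
      rfl
    rw [hval] at hφGr
    have h1 : b * (Polynomial.X : Polynomial ℂ) ^ (m + 1) + a = 0 := congrArg Prod.fst hφGr
    have h2 : b * (-(Polynomial.X : Polynomial ℂ) ^ (m + 1)) + a = 0 := congrArg Prod.snd hφGr
    have ha0 : a = 0 := by
      have : (2 : Polynomial ℂ) * a = 0 := by linear_combination h1 + h2
      have h2ne : (2 : Polynomial ℂ) ≠ 0 := two_ne_zero
      exact (mul_eq_zero.mp this).resolve_left h2ne
    have hb0 : b = 0 := by
      have hbx : b * (Polynomial.X : Polynomial ℂ) ^ (m + 1) = 0 := by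
        rw [ha0, add_zero] at h1; exact h1
      have hxne : ((Polynomial.X : Polynomial ℂ) ^ (m + 1)) ≠ 0 :=
        pow_ne_zero _ Polynomial.X_ne_zero
      exact (mul_eq_zero.mp hbx).resolve_right hxne
    have hr0 : r = 0 := by rw [hrab, ha0, hb0]; simp
    rw [hdecomp, hr0, map_zero, zero_add]
    exact Ideal.mul_mem_right _ _ (Ideal.subset_span rfl)
  · -- easy direction: span ≤ ker
    rw [Ideal.span_le]
    intro x hx
    rw [Set.mem_singleton_iff] at hx
    subst hx
    exact hφg
end

section
/- Let m ≥ 1 and let B ⊆ ℂ[t] × ℂ[u] be the ℂ-subalgebra generated by (t, u) and (t^{m+1}, −u^{m+1}). Then the quotient ℂ-vector space (ℂ[t] × ℂ[u])/B has dimension m + 1. -/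
open Polynomial

noncomputable def phi (m : ℕ) : (Polynomial ℂ × Polynomial ℂ) →ₗ[ℂ] (Fin (m + 1) → ℂ) :=
  LinearMap.pi fun i =>
    (Polynomial.lcoeff ℂ i).comp (LinearMap.fst ℂ _ _) -
      (Polynomial.lcoeff ℂ i).comp (LinearMap.snd ℂ _ _)

lemma phi_apply (m : ℕ) (x : Polynomial ℂ × Polynomial ℂ) (i : Fin (m + 1)) :
    phi m x i = x.1.coeff i - x.2.coeff i := rfl

lemma diag_mem (m : ℕ) (r : Polynomial ℂ) :
    ((r, r) : Polynomial ℂ × Polynomial ℂ) ∈ Algebra.adjoin ℂ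
      {((Polynomial.X, Polynomial.X) : Polynomial ℂ × Polynomial ℂ),
        ((Polynomial.X : Polynomial ℂ) ^ (m + 1), -(Polynomial.X : Polynomial ℂ) ^ (m + 1))} := by
  induction r using Polynomial.induction_on' with
  | add p q hp hq =>
      have := Subalgebra.add_mem _ hp hq
      simpa using this
  | monomial n c =>
      have hX : ((X, X) : Polynomial ℂ × Polynomial ℂ) ∈ Algebra.adjoin ℂ
          {((X, X) : Polynomial ℂ × Polynomial ℂ), ((X : Polynomial ℂ) ^ (m + 1), -(X : Polynomial ℂ) ^ (m + 1))} :=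
        Algebra.subset_adjoin (by simp)
      have := Subalgebra.smul_mem _ (pow_mem hX n) c
      have heq : c • (((X, X) : Polynomial ℂ × Polynomial ℂ) ^ n) =
          ((monomial n c : Polynomial ℂ), (monomial n c : Polynomial ℂ)) := by
        simp [Prod.pow_fst, Prod.pow_snd, Prod.smul_def, Polynomial.smul_eq_C_mul,
          Polynomial.C_mul_X_pow_eq_monomial]
      rwa [heq] at this

lemma left_mem (m : ℕ) (a : Polynomial ℂ) :
    ((X ^ (m + 1) * a, 0) : Polynomial ℂ × Polynomial ℂ) ∈ Algebra.adjoin ℂ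
      {((Polynomial.X, Polynomial.X) : Polynomial ℂ × Polynomial ℂ),
        ((Polynomial.X : Polynomial ℂ) ^ (m + 1), -(Polynomial.X : Polynomial ℂ) ^ (m + 1))} := by
  set B := Algebra.adjoin ℂ
      {((Polynomial.X, Polynomial.X) : Polynomial ℂ × Polynomial ℂ),
        ((Polynomial.X : Polynomial ℂ) ^ (m + 1), -(Polynomial.X : Polynomial ℂ) ^ (m + 1))}
  have hX : ((X, X) : Polynomial ℂ × Polynomial ℂ) ∈ B := Algebra.subset_adjoin (by simp)
  have hH : (((X : Polynomial ℂ) ^ (m + 1), -(X : Polynomial ℂ) ^ (m + 1)) :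
      Polynomial ℂ × Polynomial ℂ) ∈ B := Algebra.subset_adjoin (by simp)
  have h2 : (Polynomial.C (2⁻¹ : ℂ)) * 2 = 1 := by
    rw [← map_ofNat (Polynomial.C : ℂ →+* Polynomial ℂ) 2, ← Polynomial.C_mul]
    norm_num
  have key : ((X ^ (m + 1) * a, 0) : Polynomial ℂ × Polynomial ℂ) =
      (2⁻¹ : ℂ) • ((((X, X) : Polynomial ℂ × Polynomial ℂ) ^ (m + 1) +
        ((X : Polynomial ℂ) ^ (m + 1), -(X : Polynomial ℂ) ^ (m + 1))) * (a, a)) := by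
    refine Prod.ext ?_ ?_ <;>
      simp only [Prod.pow_fst, Prod.pow_snd, Prod.fst_mul, Prod.snd_mul, Prod.fst_add,
        Prod.snd_add, Prod.smul_fst, Prod.smul_snd, Polynomial.smul_eq_C_mul]
    · linear_combination (-(X ^ (m + 1) * a)) * h2
    · ring
  rw [key]
  exact Subalgebra.smul_mem _ (mul_mem (add_mem (pow_mem hX _) hH) (diag_mem m a)) _

lemma right_mem (m : ℕ) (a : Polynomial ℂ) :
    ((0, X ^ (m + 1) * a) : Polynomial ℂ × Polynomial ℂ) ∈ Algebra.adjoin ℂ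
      {((Polynomial.X, Polynomial.X) : Polynomial ℂ × Polynomial ℂ),
        ((Polynomial.X : Polynomial ℂ) ^ (m + 1), -(Polynomial.X : Polynomial ℂ) ^ (m + 1))} := by
  set B := Algebra.adjoin ℂ
      {((Polynomial.X, Polynomial.X) : Polynomial ℂ × Polynomial ℂ),
        ((Polynomial.X : Polynomial ℂ) ^ (m + 1), -(Polynomial.X : Polynomial ℂ) ^ (m + 1))}
  have hX : ((X, X) : Polynomial ℂ × Polynomial ℂ) ∈ B := Algebra.subset_adjoin (by simp)
  have hH : (((X : Polynomial ℂ) ^ (m + 1), -(X : Polynomial ℂ) ^ (m + 1)) :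
      Polynomial ℂ × Polynomial ℂ) ∈ B := Algebra.subset_adjoin (by simp)
  have h2 : (Polynomial.C (2⁻¹ : ℂ)) * 2 = 1 := by
    rw [← map_ofNat (Polynomial.C : ℂ →+* Polynomial ℂ) 2, ← Polynomial.C_mul]
    norm_num
  have key : ((0, X ^ (m + 1) * a) : Polynomial ℂ × Polynomial ℂ) =
      (2⁻¹ : ℂ) • ((((X, X) : Polynomial ℂ × Polynomial ℂ) ^ (m + 1) -
        ((X : Polynomial ℂ) ^ (m + 1), -(X : Polynomial ℂ) ^ (m + 1))) * (a, a)) := by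
    refine Prod.ext ?_ ?_ <;>
      simp only [Prod.pow_fst, Prod.pow_snd, Prod.fst_mul, Prod.snd_mul, Prod.fst_sub,
        Prod.snd_sub, Prod.smul_fst, Prod.smul_snd, Polynomial.smul_eq_C_mul]
    · ring
    · linear_combination (-(X ^ (m + 1) * a)) * h2
  rw [key]
  exact Subalgebra.smul_mem _ (mul_mem (sub_mem (pow_mem hX _) hH) (diag_mem m a)) _

lemma ker_eq (m : ℕ) :
    LinearMap.ker (phi m) = Subalgebra.toSubmodule (Algebra.adjoin ℂ
      {((Polynomial.X, Polynomial.X) : Polynomial ℂ × Polynomial ℂ),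
        ((Polynomial.X : Polynomial ℂ) ^ (m + 1), -(Polynomial.X : Polynomial ℂ) ^ (m + 1))}) := by
  apply le_antisymm
  · rintro ⟨p, q⟩ hx
    have hc : ∀ i : Fin (m + 1), p.coeff i = q.coeff i := by
      intro i
      have := congrFun (LinearMap.mem_ker.mp hx) i
      rw [phi_apply] at this
      exact sub_eq_zero.mp (by simpa using this)
    have hdvd : (X : Polynomial ℂ) ^ (m + 1) ∣ (p - q) := by
      rw [Polynomial.X_pow_dvd_iff]
      intro d hd
      have : p.coeff d = q.coeff d := hc ⟨d, hd⟩
      simp [Polynomial.coeff_sub, this]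
    obtain ⟨a, ha⟩ := hdvd
    have : ((p, q) : Polynomial ℂ × Polynomial ℂ) = (q, q) + (X ^ (m + 1) * a, 0) := by
      ext <;> simp [← ha]
    rw [this]
    exact add_mem (diag_mem m q) (left_mem m a)
  · rw [← SetLike.coe_subset_coe]
    intro x hx
    simp only [Subalgebra.coe_toSubmodule, SetLike.mem_coe] at hx
    induction hx using Algebra.adjoin_induction with
    | mem y hy =>
        rcases hy with hy | hy
        · subst hy
          ext i; simp [phi_apply]
        · subst hy
          ext i
          have hi : (i : ℕ) < m + 1 := i.isLt
          simp [phi_apply, Polynomial.coeff_X_pow, Nat.ne_of_lt hi, hi.ne]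
    | algebraMap c =>
        ext i; simp [phi_apply, Prod.algebraMap_apply]
    | add x y hx hy hx' hy' =>
        simpa using add_mem hx' hy'
    | mul x y hx hy hx' hy' =>
        simp only [SetLike.mem_coe] at hx' hy' ⊢
        have hx1 : ∀ i : ℕ, i < m + 1 → x.1.coeff i = x.2.coeff i := by
          intro i hi
          have := congrFun (LinearMap.mem_ker.mp hx') ⟨i, hi⟩
          rw [phi_apply] at this
          exact sub_eq_zero.mp this
        have hy1 : ∀ i : ℕ, i < m + 1 → y.1.coeff i = y.2.coeff i := by
          intro i hi
          have := congrFun (LinearMap.mem_ker.mp hy') ⟨i, hi⟩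
          rw [phi_apply] at this
          exact sub_eq_zero.mp this
        rw [LinearMap.mem_ker]
        ext i
        simp only [phi_apply, Pi.zero_apply, sub_eq_zero]
        show ((x * y).1).coeff i = ((x * y).2).coeff i
        rw [Prod.fst_mul, Prod.snd_mul, Polynomial.coeff_mul, Polynomial.coeff_mul]
        apply Finset.sum_congr rfl
        rintro ⟨a, b⟩ hab
        rw [Finset.HasAntidiagonal.mem_antidiagonal] at hab
        have ha : a < m + 1 := lt_of_le_of_lt (hab ▸ Nat.le_add_right a b) i.isLt
        have hb : b < m + 1 := lt_of_le_of_lt (hab ▸ Nat.le_add_left b a) i.isLt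
        simp [hx1 a ha, hy1 b hb]

lemma phi_surj (m : ℕ) : Function.Surjective (phi m) := by
  intro v
  refine ⟨(∑ i : Fin (m + 1), Polynomial.C (v i) * X ^ (i : ℕ), 0), ?_⟩
  ext i
  rw [phi_apply]
  simp only [Polynomial.coeff_zero, sub_zero, Polynomial.finset_sum_coeff,
    Polynomial.coeff_C_mul, Polynomial.coeff_X_pow]
  rw [Finset.sum_eq_single i]
  · simp
  · intro j _ hj
    rw [if_neg (fun h => hj (Fin.ext h.symm))]
    ring
  · simp

/-- The δ-invariant of the `A_{2m+1}`-singularity: the quotient of `ℂ[t] × ℂ[u]` by the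
subalgebra generated by `(t,u)` and `(t^{m+1}, −u^{m+1})` has dimension `m + 1`. -/
theorem stmt_14 (m : ℕ) (hm : 1 ≤ m)
    (B : Subalgebra ℂ (Polynomial ℂ × Polynomial ℂ))
    (hB : B = Algebra.adjoin ℂ
      {((Polynomial.X, Polynomial.X) : Polynomial ℂ × Polynomial ℂ),
        ((Polynomial.X : Polynomial ℂ) ^ (m + 1), -(Polynomial.X : Polynomial ℂ) ^ (m + 1))}) :
    Module.finrank ℂ ((Polynomial ℂ × Polynomial ℂ) ⧸ Subalgebra.toSubmodule B) = m + 1 := by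
  subst hB
  rw [← ker_eq m]
  have e := (phi m).quotKerEquivOfSurjective (phi_surj m)
  rw [e.finrank_eq]
  simp [Module.finrank_fin_fun]
end

section
/- Let m ≥ 2, a₁,…,a_{m−1} ∈ ℂ, and λ ∈ ℂˣ. Let φ_λ : ℂ[[t]] → ℂ[[t]] be the ℂ-algebra automorphism of the formal power series ring determined by t ↦ λt, and for b = (b₁,…,b_{m−1}) let A(b) ⊆ ℂ[[t]] denote the ℂ-subalgebra generated by t^{2m+1} and t² + ∑_{i=1}^{m−1} b_i t^{2i+1}. Then φ_λ(A(a)) = A(a′), where a′_i = λ^{2i−1} a_i for each i. -/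
open PowerSeries

noncomputable def rescaleAlgHom' (c : ℂ) : PowerSeries ℂ →ₐ[ℂ] PowerSeries ℂ :=
  { PowerSeries.rescale c with
    commutes' := fun r => by
      ext n
      by_cases h : n = 0 <;>
        simp [coeff_rescale, coeff_C, h, PowerSeries.algebraMap_apply] }

lemma adjoin_smul_pair {K A : Type*} [Field K] [CommRing A] [Algebra K A]
    (c d : Kˣ) (x y : A) :
    Algebra.adjoin K {(c : K) • x, (d : K) • y} = Algebra.adjoin K {x, y} := by
  have hx : x ∈ Algebra.adjoin K {(c : K) • x, (d : K) • y} := by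
    have := Subalgebra.smul_mem (Algebra.adjoin K {(c : K) • x, (d : K) • y})
      (Algebra.subset_adjoin (Set.mem_insert _ _)) (↑c⁻¹ : K)
    simpa [smul_smul] using this
  have hy : y ∈ Algebra.adjoin K {(c : K) • x, (d : K) • y} := by
    have := Subalgebra.smul_mem (Algebra.adjoin K {(c : K) • x, (d : K) • y})
      (Algebra.subset_adjoin (Set.mem_insert_of_mem _ rfl)) (↑d⁻¹ : K)
    simpa [smul_smul] using this
  apply le_antisymm <;> rw [Algebra.adjoin_le_iff] <;> rintro z (rfl | rfl)
  · exact Subalgebra.smul_mem _ (Algebra.subset_adjoin (by simp)) _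
  · exact Subalgebra.smul_mem _ (Algebra.subset_adjoin (by simp)) _
  · exact hx
  · exact hy

/-- The `𝔾ₘ`-action on crimping data of `A_{2m}`-singularities: the substitution
`t ↦ λt` carries the subalgebra `A(a) = ℂ[[t^{2m+1}, t² + ∑ aᵢ t^{2i+1}]]` to `A(a′)`
with `a′ᵢ = λ^{2i−1} aᵢ`. -/
theorem stmt_15 (m : ℕ) (hm : 2 ≤ m) (a : ℕ → ℂ) (lam : ℂˣ) :
    (PowerSeries.rescale (lam : ℂ)) ''
        ((Algebra.adjoin ℂ
          ({(PowerSeries.X : PowerSeries ℂ) ^ (2 * m + 1),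
            PowerSeries.X ^ 2 +
              ∑ i ∈ Finset.Icc 1 (m - 1),
                PowerSeries.C (R := ℂ) (a i) * PowerSeries.X ^ (2 * i + 1)} :
            Set (PowerSeries ℂ))) : Set (PowerSeries ℂ)) =
      ((Algebra.adjoin ℂ
        ({(PowerSeries.X : PowerSeries ℂ) ^ (2 * m + 1),
          PowerSeries.X ^ 2 +
            ∑ i ∈ Finset.Icc 1 (m - 1),
              PowerSeries.C (R := ℂ) ((lam : ℂ) ^ (2 * i - 1) * a i) * PowerSeries.X ^ (2 * i + 1)} :
          Set (PowerSeries ℂ))) : Set (PowerSeries ℂ)) := by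
  have hmap : PowerSeries.rescale (lam : ℂ) ''
      ((Algebra.adjoin ℂ ({(PowerSeries.X : PowerSeries ℂ) ^ (2 * m + 1),
        PowerSeries.X ^ 2 + ∑ i ∈ Finset.Icc 1 (m - 1),
          PowerSeries.C (R := ℂ) (a i) * PowerSeries.X ^ (2 * i + 1)} : Set (PowerSeries ℂ))) :
        Set (PowerSeries ℂ)) =
      ((Subalgebra.map (rescaleAlgHom' (lam : ℂ))
        (Algebra.adjoin ℂ ({(PowerSeries.X : PowerSeries ℂ) ^ (2 * m + 1),
          PowerSeries.X ^ 2 + ∑ i ∈ Finset.Icc 1 (m - 1),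
            PowerSeries.C (R := ℂ) (a i) * PowerSeries.X ^ (2 * i + 1)} : Set (PowerSeries ℂ)))) :
        Set (PowerSeries ℂ)) := rfl
  rw [hmap, AlgHom.map_adjoin]
  congr 1
  -- compute image of generators
  have hX : ∀ n : ℕ, rescaleAlgHom' (lam : ℂ) (X ^ n) = (lam : ℂ) ^ n • (X : PowerSeries ℂ) ^ n := by
    intro n
    show rescale (lam : ℂ) (X ^ n) = _
    rw [map_pow, rescale_X, mul_pow, ← map_pow, smul_eq_C_mul]
  have hg1 : rescaleAlgHom' (lam : ℂ) ((X : PowerSeries ℂ) ^ (2 * m + 1)) =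
      (lam : ℂ) ^ (2 * m + 1) • (X : PowerSeries ℂ) ^ (2 * m + 1) := hX _
  have hg2 : rescaleAlgHom' (lam : ℂ)
      ((X : PowerSeries ℂ) ^ 2 + ∑ i ∈ Finset.Icc 1 (m - 1),
        PowerSeries.C (R := ℂ) (a i) * X ^ (2 * i + 1)) =
      (lam : ℂ) ^ 2 • ((X : PowerSeries ℂ) ^ 2 + ∑ i ∈ Finset.Icc 1 (m - 1),
        PowerSeries.C (R := ℂ) ((lam : ℂ) ^ (2 * i - 1) * a i) * X ^ (2 * i + 1)) := by
    rw [map_add, hX, map_sum, smul_add, Finset.smul_sum]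
    congr 1
    apply Finset.sum_congr rfl
    intro i hi
    have hi1 : 1 ≤ i := (Finset.mem_Icc.mp hi).1
    have : rescaleAlgHom' (lam : ℂ) (PowerSeries.C (R := ℂ) (a i) * X ^ (2 * i + 1)) =
        PowerSeries.C (R := ℂ) (a i) * ((lam : ℂ) ^ (2 * i + 1) • X ^ (2 * i + 1)) := by
      rw [map_mul, hX]
      congr 1
      exact (rescaleAlgHom' (lam : ℂ)).commutes (a i)
    have h21 : 2 * i + 1 = 2 + (2 * i - 1) := by omega
    have hs : a i * (lam : ℂ) ^ (2 * i + 1) =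
        (lam : ℂ) ^ 2 * ((lam : ℂ) ^ (2 * i - 1) * a i) := by rw [h21, pow_add]; ring
    rw [this, smul_eq_C_mul, smul_eq_C_mul, ← mul_assoc, ← mul_assoc, ← map_mul, ← map_mul, hs]
  rw [Set.image_pair, hg1, hg2]
  have := adjoin_smul_pair (K := ℂ) (lam ^ (2 * m + 1)) (lam ^ 2)
    ((X : PowerSeries ℂ) ^ (2 * m + 1))
    ((X : PowerSeries ℂ) ^ 2 + ∑ i ∈ Finset.Icc 1 (m - 1),
      PowerSeries.C (R := ℂ) ((lam : ℂ) ^ (2 * i - 1) * a i) * X ^ (2 * i + 1))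
  simpa using this
end
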